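/- In the unit n-cube [0,1]^n with a fixed small ε ∈ (0,1), consider the hyperplane arrangement given by the n hyperplanes {x_i = ε} (i = 1,…,n) and the n−1 slanted hyperplanes {x₁+⋯+x_n = m} (m = 1,…,n−1). Define the 'step' of a chamber as the minimal number of these hyperplanes one must cross to reach it from the center chamber (∩_i {x_i > ε}) ∩ {x₁+⋯+x_n < 1}, crossing each hyperplane at most once. Then for 1 ≤ k ≤ n−1, the number of k-step chambers equals C(n,k) + C(n,k−1) + ⋯ + C(n,0), and the number of n-step chambers equals C(n,n) + ⋯ + C(n,1). -/

import Mathlib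

/-- The open chamber of the unit `n`-cube indexed by `(X, a)`: points with `x i < ε`
when `X i = false` (type `S`) and `x i > ε` when `X i = true` (type `L`), lying between
the slanted hyperplanes `∑ x i = a` and `∑ x i = a + 1`. -/
def chamberRegion (n : ℕ) (ε : ℝ) (p : (Fin n → Bool) × Fin n) : Set (Fin n → ℝ) :=
  {x | (∀ i, 0 < x i ∧ x i < 1) ∧
       (∀ i, if p.1 i then ε < x i else x i < ε) ∧
       ((p.2 : ℝ) < ∑ i, x i ∧ ∑ i, x i < (p.2 : ℝ) + 1)}

/-- The step of the chamber `(X, a)`: the number of `S`-coordinates plus `a`, i.e. the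
minimal number of hyperplanes one must cross (each at most once) to reach it from the
center chamber. -/
def chamberStep (n : ℕ) (p : (Fin n → Bool) × Fin n) : ℕ :=
  (Finset.univ.filter fun i => p.1 i = false).card + (p.2 : ℕ)

open Finset in
lemma region_nonempty_iff (n : ℕ) (hn : 1 ≤ n) (ε : ℝ) (hε : 0 < ε) (hεn : ε * n < 1)
    (p : (Fin n → Bool) × Fin n) :
    (chamberRegion n ε p).Nonempty ↔ chamberStep n p ≤ n := by
  classical
  set j := (Finset.univ.filter fun i => p.1 i = false).card with hj
  set L := (Finset.univ.filter fun i => p.1 i = true).card with hL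
  have hjL : L + j = n := by
    have := Finset.card_filter_add_card_filter_not (s := (univ : Finset (Fin n)))
      (p := fun i => p.1 i = true)
    simpa [hj, hL, Bool.not_eq_true] using this
  have hε1 : ε < 1 := by
    calc ε = ε * 1 := by ring
    _ ≤ ε * n := by
        have : (1:ℝ) ≤ n := by exact_mod_cast hn
        nlinarith
    _ < 1 := hεn
  have ha : (p.2 : ℕ) < n := p.2.isLt
  constructor
  · rintro ⟨x, h1, h2, h3⟩
    -- sum bound
    have hsum : ∑ i, x i ≤ (L : ℝ) + j * ε := by
      rw [← Finset.sum_filter_add_sum_filter_not univ (fun i => p.1 i = true)]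
      have b1 : ∑ i ∈ univ.filter (fun i => p.1 i = true), x i ≤ (L : ℝ) := by
        calc ∑ i ∈ univ.filter (fun i => p.1 i = true), x i
            ≤ ∑ i ∈ univ.filter (fun i => p.1 i = true), 1 :=
              Finset.sum_le_sum (fun i _ => (h1 i).2.le)
          _ = (L : ℝ) := by simp [hL]
      have b2 : ∑ i ∈ univ.filter (fun i => ¬ p.1 i = true), x i ≤ (j : ℝ) * ε := by
        calc ∑ i ∈ univ.filter (fun i => ¬ p.1 i = true), x i
            ≤ ∑ i ∈ univ.filter (fun i => ¬ p.1 i = true), ε := by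
              refine Finset.sum_le_sum (fun i hi => ?_)
              have hif : p.1 i = false := by
                simpa using (Finset.mem_filter.mp hi).2
              have := h2 i
              rw [hif] at this
              simpa using this.le
          _ = (j : ℝ) * ε := by
              simp [hj, Bool.not_eq_true, mul_comm]
      linarith
    have hjε : (j : ℝ) * ε < 1 := by
      have hjn : (j : ℝ) ≤ n := by
        exact_mod_cast Nat.le_trans (Nat.le_add_left j L) (le_of_eq hjL)
      nlinarith
    have : ((p.2 : ℕ) : ℝ) < (L : ℝ) + 1 := by
      have := h3.1
      push_cast at this ⊢
      linarith
    have haL : (p.2 : ℕ) ≤ L := by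
      have : ((p.2:ℕ):ℝ) < ((L:ℕ):ℝ) + 1 := this
      have := (by exact_mod_cast this : (p.2:ℕ) < L + 1)
      omega
    simp only [chamberStep]
    omega
  · intro hstep
    simp only [chamberStep] at hstep
    rcases Nat.eq_zero_or_pos L with hL0 | hL1
    · -- all coordinates are S; j = n, a = 0
      have hjn : j = n := by omega
      have ha0 : (p.2 : ℕ) = 0 := by omega
      have hfalse : ∀ i, p.1 i = false := by
        intro i
        by_contra h
        have hmem : i ∈ univ.filter (fun i => p.1 i = true) := by
          simp [Bool.not_eq_false] at h
          simp [h]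
        have : 0 < L := Finset.card_pos.mpr ⟨i, hmem⟩ 
        omega
      refine ⟨fun _ => ε / 2, ?_, ?_, ?_⟩
      · intro i; constructor <;> nlinarith
      · intro i; rw [hfalse i]; simpa using by nlinarith
      · have hsum : ∑ _i : Fin n, ε / 2 = (n : ℝ) * (ε / 2) := by
          simp [Finset.sum_const, mul_comm]
        rw [hsum, ha0]
        push_cast
        constructor
        · have : (1:ℝ) ≤ n := by exact_mod_cast hn
          nlinarith
        · nlinarith
    · -- at least one L coordinate
      have haLe : (p.2 : ℕ) ≤ L := by omega
      set A : ℝ := ((p.2 : ℕ) : ℝ) with hA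
      set δ : ℝ := ε / 2 with hδ
      set lo : ℝ := max A ((L : ℝ) * ε + (j : ℝ) * δ) with hlo
      set hi : ℝ := min (A + 1) ((L : ℝ) + (j : ℝ) * δ) with hhi
      have hLpos : (0:ℝ) < L := by exact_mod_cast hL1
      have hALr : A ≤ (L : ℝ) := by rw [hA]; exact_mod_cast haLe
      have hlolt : lo < hi := by
        have c1 : A < A + 1 := by linarith
        have c2 : A < (L : ℝ) + (j : ℝ) * δ := by
          rcases Nat.eq_zero_or_pos j with hj0 | hj1
          · have hAn : A < n := by rw [hA]; exact_mod_cast ha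
            have : (L : ℝ) = n := by
              have : L = n := by omega
              exact_mod_cast this
            rw [hj0]
            push_cast
            linarith
          · have : (0:ℝ) < (j:ℝ) * δ := by
              have : (0:ℝ) < (j:ℝ) := by exact_mod_cast hj1
              positivity
            linarith
        have c3 : (L : ℝ) * ε + (j : ℝ) * δ < A + 1 := by
          have hLn : (L : ℝ) + (j : ℝ) = n := by exact_mod_cast hjL
          have hA0 : 0 ≤ A := by positivity
          have hj0 : (0:ℝ) ≤ j := by positivity
          have : (L : ℝ) * ε + (j : ℝ) * δ ≤ ((L:ℝ) + (j:ℝ)) * ε := by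
            simp only [hδ]; nlinarith
          rw [hLn] at this
          nlinarith [hεn]
        have c4 : (L : ℝ) * ε + (j : ℝ) * δ < (L : ℝ) + (j : ℝ) * δ := by
          nlinarith
        simp only [hlo, hhi, max_lt_iff, lt_min_iff]
        exact ⟨⟨c1, c3⟩, ⟨c2, c4⟩⟩
      set T : ℝ := (lo + hi) / 2 with hT
      have hTlo : lo < T := by simp only [hT]; linarith
      have hThi : T < hi := by simp only [hT]; linarith
      have hT1 : A < T := lt_of_le_of_lt (le_max_left _ _) hTlo
      have hT2 : T < A + 1 := lt_of_lt_of_le hThi (min_le_left _ _)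
      have hT3 : (L : ℝ) * ε + (j : ℝ) * δ < T := lt_of_le_of_lt (le_max_right _ _) hTlo
      have hT4 : T < (L : ℝ) + (j : ℝ) * δ := lt_of_lt_of_le hThi (min_le_right _ _)
      set t : ℝ := (T - (j : ℝ) * δ) / L with ht
      have htε : ε < t := by
        rw [ht, lt_div_iff₀ hLpos]
        linarith [hT3]
      have ht1 : t < 1 := by
        rw [ht, div_lt_one hLpos]
        linarith [hT4]
      have hδpos : 0 < δ := by rw [hδ]; linarith
      have hδε : δ < ε := by rw [hδ]; linarith
      have ht0 : 0 < t := lt_trans hε htε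
      refine ⟨fun i => if p.1 i then t else δ, ?_, ?_, ?_⟩
      · intro i
        by_cases h : p.1 i = true
        · simp only [h, if_true]; exact ⟨ht0, ht1⟩
        · simp only [h, if_false]; exact ⟨hδpos, hδε.trans hε1⟩
      · intro i
        by_cases h : p.1 i = true
        · simp only [h, if_true]; exact htε
        · simp only [h, if_false]; exact hδε
      · have hsum : ∑ i, (if p.1 i then t else δ) = (L:ℝ) * t + (j:ℝ) * δ := by
          rw [Finset.sum_ite, Finset.sum_const, Finset.sum_const, nsmul_eq_mul, nsmul_eq_mul]
          simp only [Bool.not_eq_true]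
          rw [hL, hj]
        have hLt : (L:ℝ) * t = T - (j:ℝ) * δ := by
          rw [ht, mul_comm, div_mul_cancel₀ _ (ne_of_gt hLpos)]
        rw [hsum, hLt]
        constructor
        · simp only [← hA]; linarith only [hT1]
        · simp only [← hA]; linarith only [hT2]

open Finset in
lemma count_step (n k : ℕ) (hkn : k ≤ n) :
    (Finset.univ.filter fun p : (Fin n → Bool) × Fin n => chamberStep n p = k).card
    = (Finset.univ.filter fun s : Finset (Fin n) => s.card ≤ k ∧ k - s.card < n).card := by
  classical
  refine Finset.card_bij (fun p _ => Finset.univ.filter fun i => p.1 i = false) ?_ ?_ ?_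
  · intro p hp
    simp only [Finset.mem_filter, Finset.mem_univ, true_and] at hp ⊢
    simp only [chamberStep] at hp
    constructor
    · omega
    · have := p.2.isLt
      omega
  · intro p hp q hq hpq
    replace hpq : (Finset.univ.filter fun i => p.1 i = false)
        = (Finset.univ.filter fun i => q.1 i = false) := hpq
    simp only [Finset.mem_filter, Finset.mem_univ, true_and] at hp hq
    simp only [chamberStep] at hp hq
    have hfun : p.1 = q.1 := by
      funext i
      have : (i ∈ Finset.univ.filter fun i => p.1 i = false) ↔
          (i ∈ Finset.univ.filter fun i => q.1 i = false) := by rw [hpq]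

      simp only [Finset.mem_filter, Finset.mem_univ, true_and] at this
      cases hpi : p.1 i <;> cases hqi : q.1 i <;> simp_all
    have hcard : (Finset.univ.filter fun i => p.1 i = false).card
        = (Finset.univ.filter fun i => q.1 i = false).card := by rw [hpq]
    have hval : (p.2 : ℕ) = (q.2 : ℕ) := by omega
    exact Prod.ext hfun (Fin.ext hval)
  · intro s hs
    simp only [Finset.mem_filter, Finset.mem_univ, true_and] at hs
    refine ⟨⟨fun i => decide (i ∉ s), ⟨k - s.card, hs.2⟩⟩, ?_, ?_⟩
    · simp only [Finset.mem_filter, Finset.mem_univ, true_and]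
      simp only [chamberStep]
      have hfe : (Finset.univ.filter fun i => (decide (i ∉ s)) = false) = s := by
        ext i
        simp
      rw [hfe]
      omega
    · ext i
      simp

open Finset in
lemma countB (n k : ℕ) :
    (Finset.univ.filter fun s : Finset (Fin n) => s.card ≤ k ∧ k - s.card < n).card
    = ∑ i ∈ Finset.range (n+1), if i ≤ k ∧ k - i < n then n.choose i else 0 := by
  classical
  rw [Finset.card_eq_sum_card_fiberwise (f := Finset.card) (t := Finset.range (n+1))
    (fun s _ => by
      have := Finset.card_le_univ s
      simp only [Finset.card_univ, Fintype.card_fin] at this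
      simp [Nat.lt_succ_iff, this])]
  refine Finset.sum_congr rfl fun i hi => ?_
  rw [Finset.filter_filter]
  by_cases h : i ≤ k ∧ k - i < n
  · rw [if_pos h]
    have he : (Finset.univ.filter fun s : Finset (Fin n) =>
        (s.card ≤ k ∧ k - s.card < n) ∧ s.card = i) = Finset.univ.powersetCard i := by
      ext s
      simp only [Finset.mem_filter, Finset.mem_univ, true_and,
        Finset.mem_powersetCard_univ]
      constructor
      · rintro ⟨_, h2⟩; exact h2
      · intro h2; exact ⟨⟨by omega, by omega⟩, h2⟩
    rw [he, Finset.card_powersetCard, Finset.card_univ, Fintype.card_fin]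
  · rw [if_neg h]
    rw [Finset.card_eq_zero, Finset.filter_eq_empty_iff]
    rintro s _ ⟨⟨h1, h2⟩, h3⟩
    exact h ⟨by omega, by omega⟩

/-- Chamber count for the perturbed FLTZ arrangement in the unit `n`-cube: for
`1 ≤ k ≤ n − 1` the number of (nonempty) `k`-step chambers is
`C(n,k) + C(n,k−1) + ⋯ + C(n,0)`, and the number of `n`-step chambers is
`C(n,n) + ⋯ + C(n,1)`. -/
theorem stmt14 (n : ℕ) (hn : 1 ≤ n) (ε : ℝ) (hε : 0 < ε) (hεn : ε * n < 1) :
    (∀ k : ℕ, 1 ≤ k → k ≤ n - 1 →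
      Nat.card {p : (Fin n → Bool) × Fin n //
          (chamberRegion n ε p).Nonempty ∧ chamberStep n p = k} =
        ∑ i ∈ Finset.range (k + 1), n.choose i) ∧
    Nat.card {p : (Fin n → Bool) × Fin n //
        (chamberRegion n ε p).Nonempty ∧ chamberStep n p = n} =
      ∑ i ∈ Finset.Icc 1 n, n.choose i := by
  classical
  have key : ∀ k : ℕ, k ≤ n →
      Nat.card {p : (Fin n → Bool) × Fin n //
          (chamberRegion n ε p).Nonempty ∧ chamberStep n p = k}
      = ∑ i ∈ Finset.range (n+1), if i ≤ k ∧ k - i < n then n.choose i else 0 := by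
    intro k hkn
    have hiff : ∀ p : (Fin n → Bool) × Fin n,
        ((chamberRegion n ε p).Nonempty ∧ chamberStep n p = k) ↔ chamberStep n p = k := by
      intro p
      constructor
      · exact And.right
      · intro h
        exact ⟨(region_nonempty_iff n hn ε hε hεn p).mpr (h ▸ hkn), h⟩
    rw [Nat.card_congr (Equiv.subtypeEquivRight hiff), Nat.card_eq_fintype_card,
      Fintype.card_subtype, count_step n k hkn, countB]
  constructor
  · intro k hk1 hkn1
    rw [key k (by omega), ← Finset.sum_filter]
    congr 1
    ext i
    simp only [Finset.mem_filter, Finset.mem_range]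
    omega
  · rw [key n le_rfl, ← Finset.sum_filter]
    congr 1
    ext i
    simp only [Finset.mem_filter, Finset.mem_range, Finset.mem_Icc]
    omega
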